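/- If the generalized Johnson graphs J(n-1,k-1,s-1) and J(n-1,k,s) both have Hamilton cycles, then J(n,k,s) also has a Hamilton cycle. -/

import Mathlib

open Finset

section Perm
variable {α : Type*} [Fintype α] [DecidableEq α]

lemma exists_perm_memIff (S T : Finset α) (h : S.card = T.card) :
    ∃ σ : Equiv.Perm α, ∀ x, σ x ∈ T ↔ x ∈ S := by
  have h' : (Sᶜ).card = (Tᶜ).card := by simp [Finset.card_compl, h]
  let e : {x // x ∈ S} ≃ {x // x ∈ T} := Finset.equivOfCardEq h
  let f : {x // ¬ x ∈ S} ≃ {x // ¬ x ∈ T} :=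
    ((Equiv.subtypeEquivRight (fun x => (Finset.mem_compl (s := S)).symm)).trans
      (Finset.equivOfCardEq h')).trans
      (Equiv.subtypeEquivRight (fun x => Finset.mem_compl))
  refine ⟨Equiv.subtypeCongr e f, fun x => ?_⟩
  by_cases hx : x ∈ S
  · simp only [Equiv.subtypeCongr, Equiv.trans_apply,
      Equiv.sumCompl_symm_apply_of_pos hx, Equiv.sumCongr_apply, Sum.map_inl,
      Equiv.sumCompl_apply_inl]
    simpa [hx] using (e ⟨x, hx⟩).2
  · simp only [Equiv.subtypeCongr, Equiv.trans_apply,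
      Equiv.sumCompl_symm_apply_of_neg hx, Equiv.sumCongr_apply, Sum.map_inr,
      Equiv.sumCompl_apply_inr]
    simpa [hx] using (f ⟨x, hx⟩).2

lemma exists_perm_pair (A B C D : Finset α) (hA : A.card = C.card) (hB : B.card = D.card)
    (hI : (A ∩ B).card = (C ∩ D).card) :
    ∃ σ : Equiv.Perm α, (∀ x, σ x ∈ C ↔ x ∈ A) ∧ (∀ x, σ x ∈ D ↔ x ∈ B) := by
  obtain ⟨σ₁, hσ₁⟩ := exists_perm_memIff A C hA
  set B₁ : Finset α := B.image σ₁ with hB₁def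
  have hmemB₁ : ∀ x, σ₁ x ∈ B₁ ↔ x ∈ B := by
    intro x
    constructor
    · intro hx
      rw [hB₁def, Finset.mem_image] at hx
      obtain ⟨y, hy, hxy⟩ := hx
      rwa [← σ₁.injective hxy]
    · intro hx; exact Finset.mem_image_of_mem _ hx
  have hB₁C : (B₁ ∩ C).card = (D ∩ C).card := by
    have : B₁ ∩ C = (B ∩ A).image σ₁ := by
      ext y
      simp only [Finset.mem_inter, Finset.mem_image, hB₁def]
      constructor
      · rintro ⟨⟨x, hx, rfl⟩, hyC⟩
        exact ⟨x, ⟨hx, (hσ₁ x).1 hyC⟩, rfl⟩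
      · rintro ⟨x, ⟨hxB, hxA⟩, rfl⟩
        exact ⟨⟨x, hxB, rfl⟩, (hσ₁ x).2 hxA⟩
    rw [this, Finset.card_image_of_injective _ σ₁.injective, Finset.inter_comm B A,
      Finset.inter_comm D C, hI]
  have hB₁card : B₁.card = D.card := by
    rw [hB₁def, Finset.card_image_of_injective _ σ₁.injective, hB]
  -- permutation of the subtype {x // x ∈ C}
  obtain ⟨τin, hτin⟩ := exists_perm_memIff
    (Finset.subtype (· ∈ C) B₁) (Finset.subtype (· ∈ C) D)
    (by
      rw [Finset.card_subtype, Finset.card_subtype, Finset.filter_mem_eq_inter,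
        Finset.filter_mem_eq_inter, hB₁C])
  obtain ⟨τout, hτout⟩ := exists_perm_memIff
    (Finset.subtype (fun x => ¬ x ∈ C) B₁) (Finset.subtype (fun x => ¬ x ∈ C) D)
    (by
      rw [Finset.card_subtype, Finset.card_subtype]
      have h1 : ∀ (E : Finset α), (E.filter (fun x => ¬ x ∈ C)).card
          = E.card - (E ∩ C).card := by
        intro E
        rw [Finset.filter_not, Finset.card_sdiff_of_subset (Finset.filter_subset _ _),
          Finset.filter_mem_eq_inter]
      rw [h1, h1, hB₁C, hB₁card])
  set τ : Equiv.Perm α := Equiv.Perm.subtypeCongr τin τout with hτdef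
  have hτC : ∀ x, τ x ∈ C ↔ x ∈ C := by
    intro x
    by_cases hx : x ∈ C
    · rw [hτdef, Equiv.Perm.subtypeCongr.left_apply _ _ hx]
      simp [hx, (τin ⟨x, hx⟩).2]
    · rw [hτdef, Equiv.Perm.subtypeCongr.right_apply _ _ hx]
      simp [hx, (τout ⟨x, hx⟩).2]
  have hτD : ∀ x, τ x ∈ D ↔ x ∈ B₁ := by
    intro x
    by_cases hx : x ∈ C
    · rw [hτdef, Equiv.Perm.subtypeCongr.left_apply _ _ hx]
      have := hτin ⟨x, hx⟩
      simp only [Finset.mem_subtype] at this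
      rw [this]
    · rw [hτdef, Equiv.Perm.subtypeCongr.right_apply _ _ hx]
      have := hτout ⟨x, hx⟩
      simp only [Finset.mem_subtype] at this
      rw [this]
  refine ⟨σ₁.trans τ, fun x => ?_, fun x => ?_⟩
  · simp only [Equiv.trans_apply]
    rw [hτC, hσ₁]
  · simp only [Equiv.trans_apply]
    rw [hτD, hmemB₁]

lemma map_eq_of_memIff (σ : Equiv.Perm α) {A C : Finset α} (h : ∀ x, σ x ∈ C ↔ x ∈ A) :
    A.map (σ : α ↪ α) = C := by
  ext y
  rw [Finset.mem_map]
  constructor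
  · rintro ⟨x, hx, rfl⟩
    exact (h x).2 hx
  · intro hy
    refine ⟨σ.symm y, ?_, by simp⟩
    rw [← h (σ.symm y)]
    simpa using hy

end Perm

section Cross
variable {α : Type*} [Fintype α] [DecidableEq α]

lemma exists_cross (k s : ℕ) (hs : 1 ≤ s) (hsk : s < k) (X Y : Finset α)
    (hX : X.card = k) (hY : Y.card = k) (hXY : (X ∩ Y).card = s) :
    ∃ A B : Finset α, A.card = k - 1 ∧ B.card = k - 1 ∧ (A ∩ B).card = s - 1 ∧
      (A ∩ Y).card = s ∧ (B ∩ X).card = s := by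
  have hground : 2 * k - s ≤ Fintype.card α := by
    have h1 := Finset.card_union_add_card_inter X Y
    have h2 : (X ∪ Y).card ≤ Fintype.card α := Finset.card_le_univ _
    omega
  -- pick x₀ ∈ X ∩ Y
  have hXYne : (X ∩ Y).Nonempty := Finset.card_pos.1 (by omega)
  obtain ⟨x₀, hx₀⟩ := hXYne
  set T₀ : Finset α := (X ∩ Y).erase x₀ with hT₀def
  have hT₀card : T₀.card = s - 1 := by
    rw [hT₀def, Finset.card_erase_of_mem hx₀, hXY]
  have hT₀sub : T₀ ⊆ X ∩ Y := Finset.erase_subset _ _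
  -- pick y₀ ∈ X \ Y
  have hXsdY : (X \ Y).card = k - s := by
    have := Finset.card_sdiff_add_card_inter X Y
    omega
  obtain ⟨y₀, hy₀⟩ : (X \ Y).Nonempty := Finset.card_pos.1 (by omega)
  rw [Finset.mem_sdiff] at hy₀
  -- pick E ⊆ (insert y₀ Y)ᶜ with card k - 1 - s
  have hiY : (insert y₀ Y).card = k + 1 := by
    rw [Finset.card_insert_of_notMem hy₀.2, hY]
  obtain ⟨E, hEsub, hEcard⟩ := Finset.exists_subset_card_eq (s := (insert y₀ Y)ᶜ) (n := k - 1 - s)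
    (by rw [Finset.card_compl, hiY]; omega)
  have hE : ∀ a ∈ E, a ∉ Y ∧ a ≠ y₀ := by
    intro a ha
    have := hEsub ha
    rw [Finset.mem_compl, Finset.mem_insert] at this
    exact ⟨fun h => this (Or.inr h), fun h => this (Or.inl h)⟩
  -- pick F ⊆ Y \ X with card k - 1 - s
  obtain ⟨F, hFsub, hFcard⟩ := Finset.exists_subset_card_eq (s := Y \ X) (n := k - 1 - s)
    (by
      have : (Y \ X).card = k - s := by
        have := Finset.card_sdiff_add_card_inter Y X
        rw [Finset.inter_comm] at this
        omega
      omega)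
  have hF : ∀ a ∈ F, a ∈ Y ∧ a ∉ X := by
    intro a ha
    have := hFsub ha
    rwa [Finset.mem_sdiff] at this
  refine ⟨(X ∩ Y) ∪ E, insert y₀ (T₀ ∪ F), ?_, ?_, ?_, ?_, ?_⟩
  · -- card of A
    rw [Finset.card_union_of_disjoint, hXY, hEcard]
    · omega
    · rw [Finset.disjoint_left]
      intro a ha haE
      exact (hE a haE).1 (Finset.mem_inter.1 ha).2
  · -- card of B
    rw [Finset.card_insert_of_notMem, Finset.card_union_of_disjoint, hT₀card, hFcard]
    · omega
    · rw [Finset.disjoint_left]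
      intro a ha haF
      exact (hF a haF).2 (Finset.mem_inter.1 (hT₀sub ha)).1
    · rw [Finset.mem_union]
      rintro (h | h)
      · exact hy₀.2 (Finset.mem_inter.1 (hT₀sub h)).2
      · exact (hF y₀ h).2 hy₀.1
  · -- card of A ∩ B
    have : ((X ∩ Y) ∪ E) ∩ insert y₀ (T₀ ∪ F) = T₀ := by
      ext a
      simp only [Finset.mem_inter, Finset.mem_union, Finset.mem_insert]
      constructor
      · rintro ⟨h1, h2⟩
        rcases h2 with rfl | h2 | h2
        · rcases h1 with ⟨hX', hY'⟩ | hE'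
          · exact absurd hY' hy₀.2
          · exact absurd rfl (hE _ hE').2
        · exact h2
        · rcases h1 with ⟨hX', hY'⟩ | hE'
          · exact absurd hX' (hF _ h2).2
          · exact absurd (hF _ h2).1 (hE _ hE').1
      · intro h
        have h' := hT₀sub h
        rw [Finset.mem_inter] at h'
        exact ⟨Or.inl h', Or.inr (Or.inl h)⟩
    rw [this, hT₀card]
  · -- card of A ∩ Y
    have : ((X ∩ Y) ∪ E) ∩ Y = X ∩ Y := by
      rw [Finset.union_inter_distrib_right]
      have h1 : (X ∩ Y) ∩ Y = X ∩ Y := by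
        rw [Finset.inter_assoc, Finset.inter_self]
      have h2 : E ∩ Y = ∅ := by
        rw [Finset.eq_empty_iff_forall_notMem]
        intro a ha
        rw [Finset.mem_inter] at ha
        exact (hE a ha.1).1 ha.2
      rw [h1, h2, Finset.union_empty]
    rw [this, hXY]
  · -- card of B ∩ X
    have : insert y₀ (T₀ ∪ F) ∩ X = insert y₀ T₀ := by
      rw [Finset.insert_inter_of_mem hy₀.1, Finset.union_inter_distrib_right]
      have h1 : T₀ ∩ X = T₀ := by
        rw [Finset.inter_eq_left]
        intro a ha
        exact (Finset.mem_inter.1 (hT₀sub ha)).1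
      have h2 : F ∩ X = ∅ := by
        rw [Finset.eq_empty_iff_forall_notMem]
        intro a ha
        rw [Finset.mem_inter] at ha
        exact (hF a ha.1).2 ha.2
      rw [h1, h2, Finset.union_empty]
    rw [this, Finset.card_insert_of_notMem, hT₀card]
    · omega
    · intro h
      exact hy₀.2 (Finset.mem_inter.1 (hT₀sub h)).2

end Cross

lemma exists_map_castSucc_eq {m : ℕ} (S : Finset (Fin (m + 1))) (h : Fin.last m ∉ S) :
    ∃ S' : Finset (Fin m), S'.map Fin.castSuccEmb = S := by
  classical
  refine ⟨S.preimage Fin.castSucc (Fin.castSucc_injective m).injOn, ?_⟩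
  rw [Finset.map_eq_image]
  have := Finset.image_preimage (Fin.castSucc : Fin m → Fin (m+1)) S
  simp only [Fin.coe_castSuccEmb]
  rw [this]
  rw [Finset.filter_true_of_mem]
  intro x hx
  have hne : x ≠ Fin.last m := fun hh => h (hh ▸ hx)
  obtain ⟨y, hy⟩ := Fin.eq_castSucc_of_ne_last hne
  exact ⟨y, hy⟩

lemma insert_inter_insert' {β : Type*} [DecidableEq β] (a : β) (P Q : Finset β) :
    insert a P ∩ insert a Q = insert a (P ∩ Q) := by
  ext x
  simp only [Finset.mem_inter, Finset.mem_insert]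
  tauto

/-- The generalized Johnson graph `J(n,k,s)`. -/
def johnsonGraph (n k s : ℕ) : SimpleGraph {A : Finset (Fin n) // A.card = k} where
  Adj A B := A ≠ B ∧ (A.1 ∩ B.1).card = s
  symm := by
    constructor
    intro A B h
    exact ⟨h.1.symm, by rw [Finset.inter_comm]; exact h.2⟩
  loopless := by constructor; intro A h; exact h.1 rfl

open SimpleGraph


lemma johnson_key (m k s : ℕ) (hs : 1 ≤ s) (hsk : s < k)
    (h1 : ∃ (a : {A : Finset (Fin m) // A.card = k - 1})
        (p : (johnsonGraph m (k - 1) (s - 1)).Walk a a), p.IsHamiltonianCycle)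
    (h0 : ∃ (a : {A : Finset (Fin m) // A.card = k})
        (p : (johnsonGraph m k s).Walk a a), p.IsHamiltonianCycle) :
    ∃ (a : {A : Finset (Fin (m + 1)) // A.card = k})
        (p : (johnsonGraph (m + 1) k s).Walk a a), p.IsHamiltonianCycle := by
  classical
  obtain ⟨X, c0, hc0⟩ := h0
  obtain ⟨A, c1, hc1⟩ := h1
  rcases c0 with _ | ⟨hadj0, q0⟩
  · exact absurd rfl hc0.ne_nil
  rename_i Y'
  rcases c1 with _ | ⟨hadj1, q1⟩
  · exact absurd rfl hc1.ne_nil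
  rename_i B'
  -- facts about the two hamiltonian paths
  obtain ⟨hne0, hint0⟩ := hadj0
  obtain ⟨hne1, hint1⟩ := hadj1
  have htail0 := hc0.isHamiltonian_tail
  replace htail0 : (q0.copy rfl rfl).IsHamiltonian := fun v => by
    rw [SimpleGraph.Walk.support_copy]; have := htail0 v
    exact (congrArg (fun l => @List.count _ instBEqOfDecidableEq v l = 1)
      (SimpleGraph.Walk.support_tail_of_not_nil _ SimpleGraph.Walk.not_nil_cons)).mp this
  have hq0count : ∀ v, q0.support.count v = 1 := by
    intro v
    have := htail0 v
    rw [SimpleGraph.Walk.support_copy] at this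
    convert this using 2
    exact lawful_beq_subsingleton _ _
  have hq0nodup : q0.support.Nodup :=
    List.nodup_iff_count_le_one.2 (fun v => le_of_eq (hq0count v))
  have htail1 := hc1.isHamiltonian_tail
  replace htail1 : (q1.copy rfl rfl).IsHamiltonian := fun v => by
    rw [SimpleGraph.Walk.support_copy]; have := htail1 v
    exact (congrArg (fun l => @List.count _ instBEqOfDecidableEq v l = 1)
      (SimpleGraph.Walk.support_tail_of_not_nil _ SimpleGraph.Walk.not_nil_cons)).mp this
  have hq1count : ∀ v, q1.support.count v = 1 := by
    intro v
    have := htail1 v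
    rw [SimpleGraph.Walk.support_copy] at this
    convert this using 2
    exact lawful_beq_subsingleton _ _
  have hq1nodup : q1.support.Nodup :=
    List.nodup_iff_count_le_one.2 (fun v => le_of_eq (hq1count v))
  -- construct the cross sets and the permutation
  obtain ⟨A'', B'', hA''c, hB''c, hAB'', hA''Y, hB''X⟩ :=
    exists_cross k s hs hsk X.1 Y'.1 X.2 Y'.2 hint0
  obtain ⟨σ, hσ1, hσ2⟩ := exists_perm_pair A.1 B'.1 A'' B''
    (by rw [A.2, hA''c]) (by rw [B'.2, hB''c]) (by rw [hint1, hAB''])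
  have hmapA : A.1.map (σ : Fin m ↪ Fin m) = A'' := map_eq_of_memIff σ hσ1
  have hmapB : B'.1.map (σ : Fin m ↪ Fin m) = B'' := map_eq_of_memIff σ hσ2
  -- the two embeddings of the vertex sets
  set ι : Fin m ↪ Fin (m + 1) := Fin.castSuccEmb with hιdef
  have hlast_not_mem : ∀ S : Finset (Fin m), Fin.last m ∉ S.map ι := by
    intro S hmem
    rw [Finset.mem_map] at hmem
    obtain ⟨x, _, hx⟩ := hmem
    exact absurd hx (Fin.castSucc_lt_last x).ne
  set F0 : {A : Finset (Fin m) // A.card = k} → {A : Finset (Fin (m+1)) // A.card = k} :=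
    fun u => ⟨u.1.map ι, by rw [Finset.card_map]; exact u.2⟩ with hF0def
  set F1 : {A : Finset (Fin m) // A.card = k - 1} → {A : Finset (Fin (m+1)) // A.card = k} :=
    fun u => ⟨insert (Fin.last m) ((u.1.map (σ : Fin m ↪ Fin m)).map ι), by
      rw [Finset.card_insert_of_notMem (hlast_not_mem _), Finset.card_map, Finset.card_map,
        u.2]; omega⟩ with hF1def
  have hlastF0 : ∀ u, Fin.last m ∉ (F0 u).1 := fun u => hlast_not_mem _
  have hlastF1 : ∀ u, Fin.last m ∈ (F1 u).1 := fun u => Finset.mem_insert_self _ _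
  have hF0F1 : ∀ u v, F0 u ≠ F1 v := by
    intro u v h
    exact hlastF0 u (h ▸ hlastF1 v)
  have hF0inj : Function.Injective F0 := by
    intro u v h
    apply Subtype.ext
    have := congrArg Subtype.val h
    exact Finset.map_injective ι this
  have hF1inj : Function.Injective F1 := by
    intro u v h
    apply Subtype.ext
    have h' := congrArg Subtype.val h
    simp only [hF1def] at h'
    have h2 : (u.1.map (σ : Fin m ↪ Fin m)).map ι = (v.1.map (σ : Fin m ↪ Fin m)).map ι := by
      have hu := hlast_not_mem (u.1.map (σ : Fin m ↪ Fin m))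
      have hv := hlast_not_mem (v.1.map (σ : Fin m ↪ Fin m))
      rw [← Finset.erase_insert hu, ← Finset.erase_insert hv, h']
    exact Finset.map_injective _ (Finset.map_injective ι h2)
  -- the graph homomorphisms
  have hmapadj0 : ∀ a b : {A : Finset (Fin m) // A.card = k},
      (johnsonGraph m k s).Adj a b → (johnsonGraph (m+1) k s).Adj (F0 a) (F0 b) := by
    rintro a b ⟨hne, hcard⟩
    refine ⟨fun h => hne (hF0inj h), ?_⟩
    show ((a.1.map ι) ∩ (b.1.map ι)).card = s
    rw [← Finset.map_inter, Finset.card_map]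
    exact hcard
  have hmapadj1 : ∀ a b : {A : Finset (Fin m) // A.card = k - 1},
      (johnsonGraph m (k-1) (s-1)).Adj a b → (johnsonGraph (m+1) k s).Adj (F1 a) (F1 b) := by
    rintro a b ⟨hne, hcard⟩
    refine ⟨fun h => hne (hF1inj h), ?_⟩
    show (insert (Fin.last m) ((a.1.map (σ : Fin m ↪ Fin m)).map ι) ∩
      insert (Fin.last m) ((b.1.map (σ : Fin m ↪ Fin m)).map ι)).card = s
    rw [insert_inter_insert' (Fin.last m) _ _, ← Finset.map_inter, ← Finset.map_inter,
      Finset.card_insert_of_notMem (hlast_not_mem _), Finset.card_map, Finset.card_map, hcard]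
    omega
  let F0hom : johnsonGraph m k s →g johnsonGraph (m+1) k s := ⟨F0, fun {a b} h => hmapadj0 a b h⟩
  let F1hom : johnsonGraph m (k-1) (s-1) →g johnsonGraph (m+1) k s :=
    ⟨F1, fun {a b} h => hmapadj1 a b h⟩
  -- cross edges
  have eAY : (johnsonGraph (m+1) k s).Adj (F1 A) (F0 Y') := by
    refine ⟨fun h => hF0F1 Y' A h.symm, ?_⟩
    show (insert (Fin.last m) ((A.1.map (σ : Fin m ↪ Fin m)).map ι) ∩ (Y'.1.map ι)).card = s
    rw [Finset.insert_inter_of_notMem (hlast_not_mem _), ← Finset.map_inter, Finset.card_map,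
      hmapA, hA''Y]
  have eXB : (johnsonGraph (m+1) k s).Adj (F0 X) (F1 B') := by
    refine ⟨hF0F1 X B', ?_⟩
    show ((X.1.map ι) ∩ insert (Fin.last m) ((B'.1.map (σ : Fin m ↪ Fin m)).map ι)).card = s
    rw [Finset.inter_comm, Finset.insert_inter_of_notMem (hlast_not_mem _), ← Finset.map_inter,
      Finset.card_map, hmapB, hB''X]
  -- surjectivity of the pair (F0, F1)
  have surjF0 : ∀ w : {A : Finset (Fin (m+1)) // A.card = k}, Fin.last m ∉ w.1 →
      ∃ u, F0 u = w := by
    intro w hw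
    obtain ⟨S', hS'⟩ := exists_map_castSucc_eq w.1 hw
    exact ⟨⟨S', by rw [← Finset.card_map (f := ι) (s := S'), hS', w.2]⟩, Subtype.ext hS'⟩
  have surjF1 : ∀ w : {A : Finset (Fin (m+1)) // A.card = k}, Fin.last m ∈ w.1 →
      ∃ u, F1 u = w := by
    intro w hw
    obtain ⟨S', hS'⟩ := exists_map_castSucc_eq (w.1.erase (Fin.last m))
      (Finset.notMem_erase _ _)
    have hS'card : S'.card = k - 1 := by
      rw [← Finset.card_map (f := ι) (s := S'), hS', Finset.card_erase_of_mem hw, w.2]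
    have hback : (S'.map (σ.symm : Fin m ↪ Fin m)).map (σ : Fin m ↪ Fin m) = S' := by
      rw [Finset.map_map]
      ext x
      simp
    refine ⟨⟨S'.map (σ.symm : Fin m ↪ Fin m), by rw [Finset.card_map]; exact hS'card⟩,
      Subtype.ext ?_⟩
    show insert (Fin.last m) (((S'.map (σ.symm : Fin m ↪ Fin m)).map (σ : Fin m ↪ Fin m)).map ι)
      = w.1
    rw [hback, hS', Finset.insert_erase hw]
  -- the glued walk
  let q0m := q0.map F0hom
  let q1m := q1.map F1hom
  let P : (johnsonGraph (m+1) k s).Walk (F1 A) (F1 A) :=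
    SimpleGraph.Walk.cons eAY (q0m.append (SimpleGraph.Walk.cons eXB q1m))
  refine ⟨F1 A, P, ?_⟩
  rw [SimpleGraph.Walk.isHamiltonianCycle_iff_isCycle_and_support_count_tail_eq_one]
  have hsupp : P.support.tail = q0.support.map F0 ++ q1.support.map F1 := by
    show (SimpleGraph.Walk.cons eAY (q0m.append (SimpleGraph.Walk.cons eXB q1m))).support.tail = _
    rw [SimpleGraph.Walk.support_cons, List.tail_cons, SimpleGraph.Walk.support_append,
      SimpleGraph.Walk.support_cons, List.tail_cons]
    show q0m.support ++ q1m.support = _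
    rw [SimpleGraph.Walk.support_map, SimpleGraph.Walk.support_map]
    rfl
  have hcount : ∀ w, P.support.tail.count w = 1 := by
    intro w
    rw [hsupp, List.count_append]
    by_cases hw : Fin.last m ∈ w.1
    · obtain ⟨u, rfl⟩ := surjF1 w hw
      have hcnt1 : (q1.support.map F1).count (F1 u) = 1 := by
        rw [List.count_map_of_injective _ _ hF1inj]
        exact hq1count u
      have hcnt0 : (q0.support.map F0).count (F1 u) = 0 := by
        rw [List.count_eq_zero]
        intro hmem
        rw [List.mem_map] at hmem
        obtain ⟨v, _, hv⟩ := hmem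
        exact hF0F1 v u hv
      omega
    · obtain ⟨u, rfl⟩ := surjF0 w hw
      have hcnt0 : (q0.support.map F0).count (F0 u) = 1 := by
        rw [List.count_map_of_injective _ _ hF0inj]
        exact hq0count u
      have hcnt1 : (q1.support.map F1).count (F0 u) = 0 := by
        rw [List.count_eq_zero]
        intro hmem
        rw [List.mem_map] at hmem
        obtain ⟨v, _, hv⟩ := hmem
        exact hF0F1 u v hv.symm
      omega
  refine ⟨?_, fun w => by convert hcount w using 2; exact lawful_beq_subsingleton _ _⟩
  -- now the cycle structure
  have hcoe0 : ⇑F0hom = F0 := rfl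
  have hcoe1 : ⇑F1hom = F1 := rfl
  have hq0path : q0m.IsPath := by
    apply SimpleGraph.Walk.IsPath.mk'
    rw [SimpleGraph.Walk.support_map, hcoe0]
    exact hq0nodup.map hF0inj
  have hq1path : q1m.IsPath := by
    apply SimpleGraph.Walk.IsPath.mk'
    rw [SimpleGraph.Walk.support_map, hcoe1]
    exact hq1nodup.map hF1inj
  have hq0enodup : (q0.edges.map (Sym2.map F0)).Nodup := by
    have := hq0path.edges_nodup
    rwa [SimpleGraph.Walk.edges_map, hcoe0] at this
  have hq1enodup : (q1.edges.map (Sym2.map F1)).Nodup := by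
    have := hq1path.edges_nodup
    rwa [SimpleGraph.Walk.edges_map, hcoe1] at this
  have hedges : P.edges = s(F1 A, F0 Y') ::
      (q0.edges.map (Sym2.map F0) ++ (s(F0 X, F1 B') :: q1.edges.map (Sym2.map F1))) := by
    show (SimpleGraph.Walk.cons eAY (q0m.append (SimpleGraph.Walk.cons eXB q1m))).edges = _
    rw [SimpleGraph.Walk.edges_cons, SimpleGraph.Walk.edges_append,
      SimpleGraph.Walk.edges_cons, SimpleGraph.Walk.edges_map, SimpleGraph.Walk.edges_map,
      hcoe0, hcoe1]
  have hmem0 : ∀ (e : Sym2 {A : Finset (Fin (m+1)) // A.card = k}),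
      e ∈ q0.edges.map (Sym2.map F0) → ∀ v ∈ e, Fin.last m ∉ v.1 := by
    intro e he v hv
    rw [List.mem_map] at he
    obtain ⟨e', _, rfl⟩ := he
    rw [Sym2.mem_map] at hv
    obtain ⟨x, _, rfl⟩ := hv
    exact hlastF0 x
  have hmem1 : ∀ (e : Sym2 {A : Finset (Fin (m+1)) // A.card = k}),
      e ∈ q1.edges.map (Sym2.map F1) → ∀ v ∈ e, Fin.last m ∈ v.1 := by
    intro e he v hv
    rw [List.mem_map] at he
    obtain ⟨e', _, rfl⟩ := he
    rw [Sym2.mem_map] at hv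
    obtain ⟨x, _, rfl⟩ := hv
    exact hlastF1 x
  refine ⟨⟨⟨?_⟩, ?_⟩, ?_⟩
  · -- edges nodup
    rw [hedges]
    refine List.nodup_cons.2 ⟨?_, ?_⟩
    · intro hmem
      rw [List.mem_append] at hmem
      rcases hmem with h | h
      · exact hmem0 _ h (F1 A) (Sym2.mem_mk_left _ _) (hlastF1 A)
      · rw [List.mem_cons] at h
        rcases h with h | h
        · rw [Sym2.eq_iff] at h
          rcases h with ⟨h1, _⟩ | ⟨h1, _⟩
          · exact hF0F1 X A h1.symm
          · exact hne1 (hF1inj h1)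
        · exact hlastF0 Y' (hmem1 _ h (F0 Y') (Sym2.mem_mk_right _ _))
    · rw [List.nodup_append]
      refine ⟨hq0enodup, List.nodup_cons.2 ⟨?_, hq1enodup⟩, ?_⟩
      · intro h
        exact hlastF0 X (hmem1 _ h (F0 X) (Sym2.mem_mk_left _ _))
      · intro e he0 _ he1' rfl
        rw [List.mem_cons] at he1'
        rcases he1' with rfl | he1
        · exact hmem0 _ he0 (F1 B') (Sym2.mem_mk_right _ _) (hlastF1 B')
        · exact hmem0 _ he0 _ (Sym2.out_fst_mem e) (hmem1 _ he1 _ (Sym2.out_fst_mem e))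
  · -- nonempty
    simp only [P]
    exact fun h => by simpa using congrArg SimpleGraph.Walk.length h
  · -- support tail nodup
    exact List.nodup_iff_count_le_one.2 (fun v => le_of_eq (hcount v))

/-- If `J(n-1,k-1,s-1)` and `J(n-1,k,s)` both have Hamilton cycles, then `J(n,k,s)`
also has a Hamilton cycle. -/
theorem johnson_inductive_step (n k s : ℕ) (hs : 1 ≤ s) (hsk : s < k)
    (h1 : ∃ (a : {A : Finset (Fin (n - 1)) // A.card = k - 1})
        (p : (johnsonGraph (n - 1) (k - 1) (s - 1)).Walk a a), p.IsHamiltonianCycle)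
    (h0 : ∃ (a : {A : Finset (Fin (n - 1)) // A.card = k})
        (p : (johnsonGraph (n - 1) k s).Walk a a), p.IsHamiltonianCycle) :
    ∃ (a : {A : Finset (Fin n) // A.card = k})
        (p : (johnsonGraph n k s).Walk a a), p.IsHamiltonianCycle := by

  rcases n with _ | m
  · exfalso
    obtain ⟨X, -, -⟩ := h0
    have hcard := X.2
    have hle := Finset.card_le_univ X.1
    rw [hcard] at hle
    simp only [Finset.card_univ, Fintype.card_fin] at hle
    omega
  · exact johnson_key m k s hs hsk h1 h0
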